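/- In dimension 2, the flow of the bicycle equation ℓ·θ̇ = v₁ sin θ − v₂ cos θ is the projection, via the double cover (x,y) ↦ ((x²−y²)/(x²+y²), 2xy/(x²+y²)), of the flow of the linear system (ẋ,ẏ) = −(1/2ℓ)·[[v₁,v₂],[v₂,−v₁]]·(x,y): if (x(t),y(t)) solves the linear system with (x,y) ≠ (0,0), then r(t) = ((x²−y²)/(x²+y²), 2xy/(x²+y²)) solves the bicycle equation ℓ·ṙ = −v + (v·r)r. -/

import Mathlib

open Real

/-- Foote's theorem in dimension 2 (componentwise form): if (x,y) solves the linear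
system (ẋ,ẏ) = −(1/2ℓ)·[[v₁,v₂],[v₂,−v₁]]·(x,y) and never vanishes, then its image
under the double cover (x,y) ↦ ((x²−y²)/(x²+y²), 2xy/(x²+y²)) solves the planar
bicycle equation ℓ·ṙ = −v + (v·r)r. -/
theorem foote_double_cover
    (ℓ : ℝ) (hℓ : 0 < ℓ) (v₁ v₂ : ℝ → ℝ) (hv₁ : Continuous v₁) (hv₂ : Continuous v₂)
    (x y : ℝ → ℝ) (hx : ContDiff ℝ 1 x) (hy : ContDiff ℝ 1 y)
    (hne : ∀ t, (x t, y t) ≠ (0, 0))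
    (hodex : ∀ t, deriv x t = -(1 / (2 * ℓ)) * (v₁ t * x t + v₂ t * y t))
    (hodey : ∀ t, deriv y t = -(1 / (2 * ℓ)) * (v₂ t * x t - v₁ t * y t))
    (r₁ r₂ : ℝ → ℝ)
    (hr₁ : r₁ = fun t => (x t ^ 2 - y t ^ 2) / (x t ^ 2 + y t ^ 2))
    (hr₂ : r₂ = fun t => 2 * x t * y t / (x t ^ 2 + y t ^ 2)) :
    (∀ t, ℓ * deriv r₁ t = -v₁ t + (v₁ t * r₁ t + v₂ t * r₂ t) * r₁ t) ∧
    (∀ t, ℓ * deriv r₂ t = -v₂ t + (v₁ t * r₁ t + v₂ t * r₂ t) * r₂ t) := by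
  have hD : ∀ t, x t ^ 2 + y t ^ 2 ≠ 0 := by
    intro t h
    have h1 : x t = 0 ∧ y t = 0 := by
      constructor <;> nlinarith [sq_nonneg (x t), sq_nonneg (y t)]
    exact hne t (by simp [h1.1, h1.2])
  have hX : ∀ t, HasDerivAt x (deriv x t) t := fun t =>
    ((hx.differentiable one_ne_zero) t).hasDerivAt
  have hY : ∀ t, HasDerivAt y (deriv y t) t := fun t =>
    ((hy.differentiable one_ne_zero) t).hasDerivAt
  have hℓ' : ℓ ≠ 0 := ne_of_gt hℓ
  constructor
  · intro t
    have h1 : HasDerivAt (fun t => (x t ^ 2 - y t ^ 2) / (x t ^ 2 + y t ^ 2))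
        (((2 * x t ^ 1 * deriv x t - 2 * y t ^ 1 * deriv y t) * (x t ^ 2 + y t ^ 2)
          - (x t ^ 2 - y t ^ 2) * (2 * x t ^ 1 * deriv x t + 2 * y t ^ 1 * deriv y t)) /
          ((x t ^ 2 + y t ^ 2) ^ 2)) t :=
      (((hX t).pow 2).sub ((hY t).pow 2)).div (((hX t).pow 2).add ((hY t).pow 2)) (hD t)
    rw [hr₁, hr₂, h1.deriv, hodex t, hodey t]
    have h4 : x t ^ 2 * y t ^ 2 * 2 + x t ^ 4 + y t ^ 4 ≠ 0 := by
      intro h; exact pow_ne_zero 2 (hD t) (by linear_combination h)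
    field_simp [hD t, h4]
    ring
  · intro t
    have h0 : HasDerivAt (fun t => 2 * x t * y t)
        ((2 * deriv x t) * y t + 2 * x t * deriv y t) t := by
      have := (((hX t).const_mul 2).mul (hY t))
      exact this
    have h1 : HasDerivAt (fun t => 2 * x t * y t / (x t ^ 2 + y t ^ 2))
        ((((2 * deriv x t) * y t + 2 * x t * deriv y t) * (x t ^ 2 + y t ^ 2)
          - 2 * x t * y t * (2 * x t ^ 1 * deriv x t + 2 * y t ^ 1 * deriv y t)) /
          ((x t ^ 2 + y t ^ 2) ^ 2)) t :=
      h0.div (((hX t).pow 2).add ((hY t).pow 2)) (hD t)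
    rw [hr₁, hr₂, h1.deriv, hodex t, hodey t]
    have h4 : x t ^ 2 * y t ^ 2 * 2 + x t ^ 4 + y t ^ 4 ≠ 0 := by
      intro h; exact pow_ne_zero 2 (hD t) (by linear_combination h)
    field_simp [hD t, h4]
    ring
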